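/- Fix a real x > 0 and suppose c > 2. For each h > 0 small enough that c(1−π(h)) > 2, let K_h be a random variable with the beta-negative-binomial distribution BNB(x, cπ(h), c(1−π(h))). Then lim_{h→0+} h⁻¹·E[K_h] = x·r(t)·c/(c−1) and lim_{h→0+} h⁻¹·Var[K_h] = x²·r(t)·c/((c−1)(c−2)) + x·r(t)·c/(c−2). The ratio of these two limits is strictly greater than 1 for every x > 0 (infinitesimal over-dispersion). -/

import Mathlib

open scoped BigOperators
open Filter Topology Asymptotics

/-- The Beta function `B(a,b) = Γ(a)Γ(b)/Γ(a+b)`. -/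
noncomputable def betaFn (a b : ℝ) : ℝ := Real.Gamma a * Real.Gamma b / Real.Gamma (a + b)

/-- The pmf of the beta-negative-binomial distribution `BNB(x, α, β)`, obtained by
integrating the conditional pmf `P(K = k | Π) = [Γ(x+k)/(Γ(x)k!)]·Π^k(1−Π)^x` against
`Π ~ Beta(α,β)`: `P(K = k) = [Γ(x+k)/(Γ(x)k!)]·B(k+α, x+β)/B(α,β)`. -/
noncomputable def bnbPmf (x α β : ℝ) (k : ℕ) : ℝ :=
  Real.Gamma (x + (k : ℝ)) / (Real.Gamma x * (k.factorial : ℝ)) *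
    (betaFn ((k : ℝ) + α) (x + β) / betaFn α β)

/-- `π(h) = 1 − exp(−∫_t^{t+h} r(s) ds)`. -/
noncomputable def pih (r : ℝ → ℝ) (t h : ℝ) : ℝ :=
  1 - Real.exp (-(∫ s in t..(t + h), r s))

open MeasureTheory intervalIntegral

lemma complex_real_eqOn (a b : ℝ) :
    Set.EqOn (fun y : ℝ => (y:ℂ) ^ ((a:ℂ) - 1) * (1 - (y:ℂ)) ^ ((b:ℂ) - 1))
      (fun y : ℝ => ((y ^ (a - 1) * (1 - y) ^ (b - 1) : ℝ) : ℂ)) (Set.uIcc 0 1) := by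
  intro y hy
  rw [Set.uIcc_of_le (by norm_num : (0:ℝ) ≤ 1), Set.mem_Icc] at hy
  have h1 : (0:ℝ) ≤ y := hy.1
  have h2 : (0:ℝ) ≤ 1 - y := by linarith [hy.2]
  simp only [Complex.ofReal_mul]
  rw [Complex.ofReal_cpow h1, Complex.ofReal_cpow h2]
  push_cast
  ring_nf

lemma betaIntegrable {a b : ℝ} (ha : 0 < a) (hb : 0 < b) :
    IntervalIntegrable (fun y : ℝ => y ^ (a - 1) * (1 - y) ^ (b - 1)) volume 0 1 := by
  have hC := Complex.betaIntegral_convergent (u := (a:ℂ)) (v := (b:ℂ)) (by simpa) (by simpa)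
  have hsub : Set.Ioc (0:ℝ) 1 ⊆ Set.uIcc 0 1 := by
    rw [Set.uIcc_of_le (by norm_num : (0:ℝ) ≤ 1)]
    exact Set.Ioc_subset_Icc_self
  have h1 : IntegrableOn
      (fun y : ℝ => ((y ^ (a - 1) * (1 - y) ^ (b - 1) : ℝ) : ℂ)) (Set.Ioc 0 1) volume :=
    (hC.1.congr_fun (fun y hy => complex_real_eqOn a b (hsub hy)) measurableSet_Ioc)
  constructor
  · have := h1.integrable.re
    exact this.congr (by filter_upwards with y; simp)
  · simp [Set.Ioc_eq_empty (by norm_num : ¬ (1:ℝ) < 0), MeasureTheory.integrableOn_empty]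

lemma betaIntegral_eval {a b : ℝ} (ha : 0 < a) (hb : 0 < b) :
    ∫ y in (0:ℝ)..1, y ^ (a - 1) * (1 - y) ^ (b - 1) = betaFn a b := by
  have key : Complex.Gamma a * Complex.Gamma b
      = Complex.Gamma ((a:ℂ) + b) * Complex.betaIntegral a b :=
    Complex.Gamma_mul_Gamma_eq_betaIntegral (by simpa) (by simpa)
  have hG : Complex.Gamma ((a:ℂ)+b) ≠ 0 := by
    rw [(by push_cast; rfl : ((a:ℂ)+b) = ((a+b:ℝ):ℂ)), Complex.Gamma_ofReal]
    exact_mod_cast (Real.Gamma_pos_of_pos (by linarith)).ne'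
  have hBI : Complex.betaIntegral a b
      = ((∫ y in (0:ℝ)..1, y ^ (a - 1) * (1 - y) ^ (b - 1) : ℝ) : ℂ) := by
    rw [Complex.betaIntegral]
    rw [intervalIntegral.integral_congr (complex_real_eqOn a b)]
    exact_mod_cast (RCLike.intervalIntegral_ofReal (𝕜 := ℂ)
      (f := fun y : ℝ => y ^ (a - 1) * (1 - y) ^ (b - 1)) (a := 0) (b := 1) (μ := volume))
  rw [hBI] at key
  have : ((Real.Gamma a * Real.Gamma b : ℝ) : ℂ)
      = ((Real.Gamma (a+b) * ∫ y in (0:ℝ)..1, y ^ (a - 1) * (1 - y) ^ (b - 1) : ℝ) : ℂ) := by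
    push_cast
    rw [← Complex.Gamma_ofReal, ← Complex.Gamma_ofReal, ← Complex.Gamma_ofReal] at *
    convert key using 2 <;> push_cast <;> ring
  have h2 := Complex.ofReal_injective this
  rw [betaFn]
  field_simp at h2 ⊢
  linarith [h2]


noncomputable def nbCoef (x : ℝ) (k : ℕ) : ℝ :=
  Real.Gamma (x + k) / (Real.Gamma x * k.factorial)

lemma nbCoef_zero (x : ℝ) (hx : 0 < x) : nbCoef x 0 = 1 := by
  have := (Real.Gamma_pos_of_pos hx).ne'
  simp [nbCoef, this]

lemma nbCoef_succ (x : ℝ) (hx : 0 < x) (k : ℕ) :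
    nbCoef x (k + 1) = nbCoef x k * ((x + k) / (k + 1)) := by
  have hxk : x + (k:ℝ) ≠ 0 := by positivity
  have hG : Real.Gamma (x + (k+1:ℕ)) = (x + k) * Real.Gamma (x + k) := by
    rw [show x + ((k:ℕ)+1:ℕ) = (x + k) + 1 by push_cast; ring, Real.Gamma_add_one hxk]
  rw [nbCoef, nbCoef, hG, Nat.factorial_succ]
  have h1 : (Real.Gamma x) ≠ 0 := (Real.Gamma_pos_of_pos hx).ne'
  have h2 : ((k+1:ℕ):ℝ) ≠ 0 := by positivity
  field_simp
  push_cast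
  ring

lemma nbCoef_pos (x : ℝ) (hx : 0 < x) (k : ℕ) : 0 < nbCoef x k := by
  have : (0:ℝ) < x + k := by positivity
  exact div_pos (Real.Gamma_pos_of_pos this)
    (mul_pos (Real.Gamma_pos_of_pos hx) (by positivity))

lemma ratio_tendsto (x : ℝ) : Tendsto (fun k : ℕ => (x + k) / (k + 1)) atTop (𝓝 1) := by
  have : (fun k : ℕ => (x + k) / (k + 1)) = fun k : ℕ => (x - 1) * (1 / (k + 1)) + 1 := by
    funext k
    have : ((k:ℝ) + 1) ≠ 0 := by positivity
    field_simp
    ring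
  rw [this]
  have h := (tendsto_one_div_add_atTop_nhds_zero_nat.const_mul (x - 1)).add
    (tendsto_const_nhds (x := (1:ℝ)))
  simpa using h

lemma summable_aux (x p : ℝ) (hx : 0 < x) (hp : 0 ≤ p) (hp1 : p < 1)
    (g : ℕ → ℝ) (hg_pos : ∀ k, 0 < g k)
    (hg_ratio : Tendsto (fun k : ℕ => g (k+1) / g k) atTop (𝓝 p)) :
    Summable g := by
  set r := (1 + p) / 2 with hr
  have hr1 : r < 1 := by rw [hr]; linarith
  have hpr : p < r := by rw [hr]; linarith
  apply summable_of_ratio_norm_eventually_le hr1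
  have hev : ∀ᶠ k : ℕ in atTop, g (k+1) / g k ≤ r :=
    hg_ratio.eventually_le_const hpr
  filter_upwards [hev] with k hk
  rw [Real.norm_eq_abs, Real.norm_eq_abs, abs_of_pos (hg_pos _), abs_of_pos (hg_pos _)]
  calc g (k+1) = (g (k+1) / g k) * g k := (div_mul_cancel₀ _ (hg_pos k).ne').symm
  _ ≤ r * g k := mul_le_mul_of_nonneg_right hk (hg_pos k).le

lemma summable_nbCoef_mul (x p : ℝ) (hx : 0 < x) (hp : 0 < p) (hp1 : p < 1) :
    Summable (fun k : ℕ => nbCoef x k * p ^ k) := by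
  apply summable_aux x p hx hp.le hp1
  · intro k; exact mul_pos (nbCoef_pos x hx k) (by positivity)
  · have : (fun k : ℕ => (nbCoef x (k+1) * p ^ (k+1)) / (nbCoef x k * p ^ k))
        = fun k : ℕ => ((x + k) / (k + 1)) * p := by
      funext k
      rw [nbCoef_succ x hx, pow_succ]
      have h1 := (nbCoef_pos x hx k).ne'
      have h2 : p ^ k ≠ 0 := by positivity
      field_simp
    rw [this]
    simpa using (ratio_tendsto x).mul_const p

lemma summable_nbCoef_mul' (x p : ℝ) (hx : 0 < x) (hp : 0 < p) (hp1 : p < 1) :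
    Summable (fun k : ℕ => ((k:ℝ)+1) * nbCoef x (k+1) * p ^ k) := by
  apply summable_aux x p hx hp.le hp1
  · intro k
    exact mul_pos (mul_pos (by positivity) (nbCoef_pos x hx (k+1))) (by positivity)
  · simp only [Nat.cast_add, Nat.cast_one]
    have : (fun k : ℕ => (((k:ℝ)+1+1) * nbCoef x (k+1+1) * p ^ (k+1))
        / (((k:ℝ)+1) * nbCoef x (k+1) * p ^ k))
        = fun k : ℕ => (((k:ℝ)+2)/((k:ℝ)+1)) * ((x + (k+1)) / ((k:ℝ)+2)) * p := by
      funext k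
      rw [nbCoef_succ x hx (k+1), pow_succ]
      have h1 := (nbCoef_pos x hx (k+1)).ne'
      have h2 : p ^ k ≠ 0 := by positivity
      have h3 : ((k:ℝ)+1) ≠ 0 := by positivity
      have h4 : ((k:ℝ)+2) ≠ 0 := by positivity
      push_cast
      field_simp
    rw [this]
    have l1 : Tendsto (fun k : ℕ => (((k:ℝ)+2)/((k:ℝ)+1))) atTop (𝓝 1) := by
      have : (fun k : ℕ => (((k:ℝ)+2)/((k:ℝ)+1))) = fun k : ℕ => 1 / ((k:ℝ)+1) + 1 := by
        funext k
        have : ((k:ℝ)+1) ≠ 0 := by positivity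
        field_simp
        ring
      rw [this]
      simpa using tendsto_one_div_add_atTop_nhds_zero_nat.add (tendsto_const_nhds (x := (1:ℝ)))
    have l2 : Tendsto (fun k : ℕ => ((x + ((k:ℕ)+1:ℕ)) / (((k:ℕ)+1:ℕ) + 1))) atTop (𝓝 1) := by
      exact (ratio_tendsto x).comp (tendsto_add_atTop_nat 1)
    have := (l1.mul (by exact_mod_cast l2)).mul_const p
    simpa using this.congr (by intro k; push_cast; ring_nf)

lemma rpow_factor {t x : ℝ} (ht : t < 1) : (1-t) ^ x = (1-t) ^ (x-1) * (1-t) := by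
  have h : (0:ℝ) < 1 - t := by linarith
  rw [show x = (x-1)+1 by ring, Real.rpow_add_one h.ne' (x-1)]
  ring_nf

lemma contOn_integrand (x p : ℝ) (hp1 : p < 1) (n : ℕ) :
    ContinuousOn (fun t : ℝ => t ^ n * (1 - t) ^ (x - 1)) (Set.uIcc 0 p) := by
  intro t ht
  apply ContinuousAt.continuousWithinAt
  have ht1 : t < 1 := by
    rcases Set.mem_uIcc.mp ht with h | h
    · linarith [h.2]
    · linarith [h.2, h.1]
  have h1t : (1:ℝ) - t ≠ 0 := by linarith
  exact ((continuous_pow n).continuousAt).mul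
    ((Real.continuousAt_rpow_const (1-t) (x-1) (Or.inl h1t)).comp
      ((continuous_const.sub continuous_id).continuousAt))

lemma intInt (x p : ℝ) (hp1 : p < 1) (n : ℕ) :
    IntervalIntegrable (fun t : ℝ => t ^ n * (1 - t) ^ (x - 1)) volume 0 p :=
  (contOn_integrand x p hp1 n).intervalIntegrable

lemma ftc_base (x p : ℝ) (hx : 0 < x) (hp : 0 ≤ p) (hp1 : p < 1) :
    ∫ t in (0:ℝ)..p, x * (1 - t) ^ (x - 1) = 1 - (1-p) ^ x := by
  have key : ∀ t ∈ Set.uIcc (0:ℝ) p,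
      HasDerivAt (fun s : ℝ => -((1-s) ^ x)) (x * (1-t) ^ (x-1)) t := by
    intro t ht
    have ht1 : t < 1 := by
      rcases Set.mem_uIcc.mp ht with h | h
      · linarith [h.2]
      · linarith [h.2, h.1]
    have h0 : (0:ℝ) < 1 - t := by linarith
    have h1 : HasDerivAt (fun s : ℝ => 1 - s) (-1) t := by
      simpa using (hasDerivAt_id t).const_sub 1
    have h2 : HasDerivAt (fun s : ℝ => (1-s) ^ x) (x * (1-t) ^ (x-1) * (-1)) t :=
      (Real.hasDerivAt_rpow_const (Or.inl h0.ne')).comp t h1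
    have := h2.neg
    exact this.congr_deriv (by ring)
  have hint : IntervalIntegrable (fun t : ℝ => x * (1 - t) ^ (x - 1)) volume 0 p := by
    simpa using (intInt x p hp1 0).const_mul x
  rw [intervalIntegral.integral_eq_sub_of_hasDerivAt key hint]
  simp
  ring

lemma ftc_step (x p : ℝ) (hx : 0 < x) (hp : 0 ≤ p) (hp1 : p < 1) (n : ℕ) :
    ∫ t in (0:ℝ)..p,
      ((((n:ℝ)+1) * (t ^ n * (1-t) ^ (x-1)) - (x + n + 1) * (t ^ (n+1) * (1-t) ^ (x-1))))
      = p ^ (n+1) * (1-p) ^ x := by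
  have key : ∀ t ∈ Set.uIcc (0:ℝ) p,
      HasDerivAt (fun s : ℝ => s ^ (n+1) * (1-s) ^ x)
        ((((n:ℝ)+1) * (t ^ n * (1-t) ^ (x-1)) - (x + n + 1) * (t ^ (n+1) * (1-t) ^ (x-1)))) t := by
    intro t ht
    have ht1 : t < 1 := by
      rcases Set.mem_uIcc.mp ht with h | h
      · linarith [h.2]
      · linarith [h.2, h.1]
    have h0 : (0:ℝ) < 1 - t := by linarith
    have h1 : HasDerivAt (fun s : ℝ => 1 - s) (-1) t := by
      simpa using (hasDerivAt_id t).const_sub 1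
    have h2 : HasDerivAt (fun s : ℝ => (1-s) ^ x) (x * (1-t) ^ (x-1) * (-1)) t :=
      (Real.hasDerivAt_rpow_const (Or.inl h0.ne')).comp t h1
    have h3 : HasDerivAt (fun s : ℝ => s ^ (n+1)) (((n:ℝ)+1) * t ^ n) t := by
      simpa using hasDerivAt_pow (n+1) t
    have h4 := h3.mul h2
    refine h4.congr_deriv ?_
    rw [rpow_factor (x := x) ht1]
    push_cast
    ring
  have hint : IntervalIntegrable (fun t : ℝ =>
      (((n:ℝ)+1) * (t ^ n * (1-t) ^ (x-1)) - (x + n + 1) * (t ^ (n+1) * (1-t) ^ (x-1))))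
      volume 0 p :=
    ((intInt x p hp1 n).const_mul _).sub ((intInt x p hp1 (n+1)).const_mul _)
  rw [intervalIntegral.integral_eq_sub_of_hasDerivAt key hint]
  simp

noncomputable def binJ (x p : ℝ) (n : ℕ) : ℝ :=
  ((n:ℝ)+1) * nbCoef x (n+1) * ∫ t in (0:ℝ)..p, t ^ n * (1-t) ^ (x-1)

lemma binJ_step (x p : ℝ) (hx : 0 < x) (hp : 0 ≤ p) (hp1 : p < 1) (n : ℕ) :
    binJ x p n - binJ x p (n+1) = nbCoef x (n+1) * p ^ (n+1) * (1-p) ^ x := by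
  have hcoef : ((n:ℝ)+1+1) * nbCoef x (n+1+1) = (x + n + 1) * nbCoef x (n+1) := by
    rw [nbCoef_succ x hx (n+1)]
    have : ((n:ℝ)+1+1) ≠ 0 := by positivity
    push_cast
    field_simp
    ring
  have expand : binJ x p n - binJ x p (n+1)
      = nbCoef x (n+1) * ∫ t in (0:ℝ)..p,
        ((((n:ℝ)+1) * (t ^ n * (1-t) ^ (x-1)) - (x + n + 1) * (t ^ (n+1) * (1-t) ^ (x-1)))) := by
    rw [intervalIntegral.integral_sub ((intInt x p hp1 n).const_mul _)
      ((intInt x p hp1 (n+1)).const_mul _)]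
    rw [intervalIntegral.integral_const_mul, intervalIntegral.integral_const_mul]
    rw [binJ, binJ]
    push_cast
    rw [hcoef]
    ring
  rw [expand, ftc_step x p hx hp hp1 n]
  ring

lemma binJ_zero (x p : ℝ) (hx : 0 < x) (hp : 0 ≤ p) (hp1 : p < 1) :
    binJ x p 0 = 1 - (1-p) ^ x := by
  have h1 : nbCoef x 1 = x := by
    rw [nbCoef_succ x hx 0, nbCoef_zero x hx]
    simp
  rw [binJ, h1, ← ftc_base x p hx hp hp1, ← intervalIntegral.integral_const_mul]
  simp

lemma partial_sum_eq (x p : ℝ) (hx : 0 < x) (hp : 0 ≤ p) (hp1 : p < 1) (n : ℕ) :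
    ∑ k ∈ Finset.range (n+1), nbCoef x k * p ^ k * (1-p) ^ x = 1 - binJ x p n := by
  induction n with
  | zero => simp [nbCoef_zero x hx, binJ_zero x p hx hp hp1]
  | succ n ih =>
    rw [Finset.sum_range_succ, ih]
    have := binJ_step x p hx hp hp1 n
    ring_nf
    ring_nf at this
    linarith [this]

lemma binJ_tendsto_zero (x p : ℝ) (hx : 0 < x) (hp : 0 < p) (hp1 : p < 1) :
    Tendsto (fun n => binJ x p n) atTop (𝓝 0) := by
  have hb : ∀ n : ℕ, binJ x p n ≤ (((n:ℝ)+1) * nbCoef x (n+1) * p ^ n) * (1/x) := by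
    intro n
    have hmono : ∫ t in (0:ℝ)..p, t ^ n * (1-t) ^ (x-1)
        ≤ ∫ t in (0:ℝ)..p, p ^ n * (1-t) ^ (x-1) := by
      apply intervalIntegral.integral_mono_on hp.le (intInt x p hp1 n)
        (by simpa using (intInt x p hp1 0).const_mul (p ^ n))
      intro t ht
      apply mul_le_mul_of_nonneg_right (pow_le_pow_left₀ ht.1 ht.2 n)
        (Real.rpow_nonneg (by linarith [ht.2]) _)
    have hval : ∫ t in (0:ℝ)..p, p ^ n * (1-t) ^ (x-1) ≤ p ^ n * (1/x) := by
      have : ∫ t in (0:ℝ)..p, p ^ n * (1-t) ^ (x-1)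
          = (p ^ n / x) * ∫ t in (0:ℝ)..p, x * (1-t) ^ (x-1) := by
        rw [← intervalIntegral.integral_const_mul]
        apply intervalIntegral.integral_congr
        intro t _
        field_simp
      rw [this, ftc_base x p hx hp.le hp1]
      have h1 : (1:ℝ) - (1-p) ^ x ≤ 1 := by
        have := Real.rpow_nonneg (by linarith : (0:ℝ) ≤ 1 - p) x
        linarith
      have h2 : (0:ℝ) ≤ p ^ n / x := by positivity
      calc (p ^ n / x) * (1 - (1-p) ^ x) ≤ (p ^ n / x) * 1 := mul_le_mul_of_nonneg_left h1 h2
      _ = p ^ n * (1/x) := by ring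
    calc binJ x p n ≤ ((n:ℝ)+1) * nbCoef x (n+1) * (p ^ n * (1/x)) := by
          apply mul_le_mul_of_nonneg_left (hmono.trans hval)
          exact (mul_pos (by positivity) (nbCoef_pos x hx (n+1))).le
    _ = (((n:ℝ)+1) * nbCoef x (n+1) * p ^ n) * (1/x) := by ring
  have hnn : ∀ n : ℕ, 0 ≤ binJ x p n := by
    intro n
    apply mul_nonneg (mul_nonneg (by positivity) (nbCoef_pos x hx (n+1)).le)
    apply intervalIntegral.integral_nonneg hp.le
    intro t ht
    exact mul_nonneg (pow_nonneg ht.1 n) (Real.rpow_nonneg (by linarith [ht.2]) _)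
  have hupper : Tendsto (fun n : ℕ => (((n:ℝ)+1) * nbCoef x (n+1) * p ^ n) * (1/x))
      atTop (𝓝 0) := by
    have := (summable_nbCoef_mul' x p hx hp hp1).tendsto_atTop_zero
    simpa using this.mul_const (1/x)
  exact tendsto_of_tendsto_of_tendsto_of_le_of_le tendsto_const_nhds hupper hnn hb

lemma hasSum_binomial (x p : ℝ) (hx : 0 < x) (hp : 0 < p) (hp1 : p < 1) :
    HasSum (fun k : ℕ => nbCoef x k * p ^ k * (1-p) ^ x) 1 := by
  have hsum : Summable (fun k : ℕ => nbCoef x k * p ^ k * (1-p) ^ x) :=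
    (summable_nbCoef_mul x p hx hp hp1).mul_right _
  have h1 := hsum.hasSum
  have h2 := h1.tendsto_sum_nat
  have h3 : Tendsto (fun n : ℕ => ∑ k ∈ Finset.range n, nbCoef x k * p ^ k * (1-p) ^ x)
      atTop (𝓝 1) := by
    rw [← tendsto_add_atTop_iff_nat 1]
    have : (fun n : ℕ => ∑ k ∈ Finset.range (n+1), nbCoef x k * p ^ k * (1-p) ^ x)
        = fun n : ℕ => 1 - binJ x p n := by
      funext n; exact partial_sum_eq x p hx hp.le hp1 n
    rw [this]
    simpa using (binJ_tendsto_zero x p hx hp hp1).const_sub 1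
  convert h1 using 1
  exact (tendsto_nhds_unique h2 h3).symm

lemma betaFn_pos {a b : ℝ} (ha : 0 < a) (hb : 0 < b) : 0 < betaFn a b :=
  div_pos (mul_pos (Real.Gamma_pos_of_pos ha) (Real.Gamma_pos_of_pos hb))
    (Real.Gamma_pos_of_pos (by linarith))

lemma bnbPmf_eq (x α β : ℝ) (k : ℕ) :
    bnbPmf x α β k = nbCoef x k * betaFn ((k:ℝ) + α) (x + β) / betaFn α β := by
  rw [bnbPmf, nbCoef]; ring

lemma contOn_g (x α β : ℝ) (k : ℕ) :
    ContinuousOn (fun y : ℝ => nbCoef x k * (y ^ ((k:ℝ) + α - 1) * (1-y) ^ (x + β - 1)))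
      (Set.Ioo 0 1) := by
  intro y hy
  apply ContinuousAt.continuousWithinAt
  have h1 : ContinuousAt (fun y : ℝ => y ^ ((k:ℝ) + α - 1)) y :=
    Real.continuousAt_rpow_const y _ (Or.inl hy.1.ne')
  have h2 : ContinuousAt (fun y : ℝ => (1-y) ^ (x + β - 1)) y :=
    (Real.continuousAt_rpow_const (1-y) _ (Or.inl (by linarith [hy.2] : (1:ℝ)-y ≠ 0))).comp
      ((continuous_const.sub continuous_id).continuousAt)
  exact (h1.mul h2).const_mul _

lemma integrableOn_g (x α β : ℝ) (hx : 0 < x) (hα : 0 < α) (hβ : 0 < β) (k : ℕ) :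
    MeasureTheory.IntegrableOn
      (fun y : ℝ => nbCoef x k * (y ^ ((k:ℝ) + α - 1) * (1-y) ^ (x + β - 1)))
      (Set.Ioo 0 1) MeasureTheory.volume := by
  have h := (betaIntegrable (a := (k:ℝ) + α) (b := x + β) (by positivity) (by positivity)).1
  have h2 : MeasureTheory.IntegrableOn
      (fun y : ℝ => y ^ ((k:ℝ) + α - 1) * (1-y) ^ (x + β - 1)) (Set.Ioo 0 1) := by
    exact h.mono_set Set.Ioo_subset_Ioc_self
  exact h2.const_mul _

lemma integral_g (x α β : ℝ) (hx : 0 < x) (hα : 0 < α) (hβ : 0 < β) (k : ℕ) :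
    ∫ y in Set.Ioo (0:ℝ) 1, nbCoef x k * (y ^ ((k:ℝ) + α - 1) * (1-y) ^ (x + β - 1))
      = nbCoef x k * betaFn ((k:ℝ) + α) (x + β) := by
  rw [← MeasureTheory.integral_Ioc_eq_integral_Ioo, ← intervalIntegral.integral_of_le (by norm_num : (0:ℝ) ≤ 1)]
  rw [intervalIntegral.integral_const_mul]
  congr 1
  exact betaIntegral_eval (a := (k:ℝ) + α) (b := x + β) (by positivity) (by positivity)

lemma integrableOn_beta_Ioo {a b : ℝ} (ha : 0 < a) (hb : 0 < b) :
    MeasureTheory.IntegrableOn (fun y : ℝ => y ^ (a - 1) * (1-y) ^ (b - 1))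
      (Set.Ioo 0 1) MeasureTheory.volume :=
  (betaIntegrable ha hb).1.mono_set Set.Ioo_subset_Ioc_self

lemma integral_beta_Ioo {a b : ℝ} (ha : 0 < a) (hb : 0 < b) :
    ∫ y in Set.Ioo (0:ℝ) 1, y ^ (a - 1) * (1-y) ^ (b - 1) = betaFn a b := by
  rw [← MeasureTheory.integral_Ioc_eq_integral_Ioo,
    ← intervalIntegral.integral_of_le (by norm_num : (0:ℝ) ≤ 1)]
  exact betaIntegral_eval ha hb

lemma g_nonneg (x α β : ℝ) (hx : 0 < x) (k : ℕ) {y : ℝ} (hy : y ∈ Set.Ioo (0:ℝ) 1) :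
    0 ≤ nbCoef x k * (y ^ ((k:ℝ) + α - 1) * (1-y) ^ (x + β - 1)) := by
  apply mul_nonneg (nbCoef_pos x hx k).le
  exact mul_nonneg (Real.rpow_nonneg hy.1.le _) (Real.rpow_nonneg (by linarith [hy.2]) _)

lemma hasSum_g (x α β : ℝ) (hx : 0 < x) {y : ℝ} (hy : y ∈ Set.Ioo (0:ℝ) 1) :
    HasSum (fun k : ℕ => nbCoef x k * (y ^ ((k:ℝ) + α - 1) * (1-y) ^ (x + β - 1)))
      (y ^ (α - 1) * (1-y) ^ (β - 1)) := by
  obtain ⟨hy0, hy1⟩ := hy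
  have h1y : (0:ℝ) < 1 - y := by linarith
  have key : ∀ k : ℕ, nbCoef x k * (y ^ ((k:ℝ) + α - 1) * (1-y) ^ (x + β - 1))
      = (nbCoef x k * y ^ k * (1-y) ^ x) * (y ^ (α - 1) * (1-y) ^ (β - 1)) := by
    intro k
    rw [show (k:ℝ) + α - 1 = (k:ℝ) + (α - 1) by ring, Real.rpow_add hy0,
      Real.rpow_natCast, show x + β - 1 = x + (β - 1) by ring, Real.rpow_add h1y]
    ring
  have := (hasSum_binomial x y hx hy0 hy1).mul_right (y ^ (α - 1) * (1-y) ^ (β - 1))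
  rw [one_mul] at this
  rw [show (fun k : ℕ => nbCoef x k * (y ^ ((k:ℝ) + α - 1) * (1-y) ^ (x + β - 1)))
    = fun k : ℕ => (nbCoef x k * y ^ k * (1-y) ^ x) * (y ^ (α - 1) * (1-y) ^ (β - 1))
    from funext key]
  exact this

open MeasureTheory ENNReal in
lemma hasSum_coef_beta (x α β : ℝ) (hx : 0 < x) (hα : 0 < α) (hβ : 0 < β) :
    HasSum (fun k : ℕ => nbCoef x k * betaFn ((k:ℝ) + α) (x + β)) (betaFn α β) := by
  set g : ℕ → ℝ → ℝ :=
    fun k y => nbCoef x k * (y ^ ((k:ℝ) + α - 1) * (1-y) ^ (x + β - 1)) with hg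
  set G : ℕ → ℝ → ℝ≥0∞ := fun k y => ENNReal.ofReal (g k y) with hG
  have hmeas : ∀ k : ℕ, AEMeasurable (G k) (volume.restrict (Set.Ioo (0:ℝ) 1)) := fun k =>
    (ENNReal.measurable_ofReal.comp_aemeasurable
      ((contOn_g x α β k).aemeasurable measurableSet_Ioo))
  have hpt : ∀ y ∈ Set.Ioo (0:ℝ) 1,
      (∑' k : ℕ, G k y) = ENNReal.ofReal (y ^ (α - 1) * (1-y) ^ (β - 1)) := by
    intro y hy
    rw [← ENNReal.ofReal_tsum_of_nonneg (fun k => g_nonneg x α β hx k hy)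
      (hasSum_g x α β hx hy).summable, (hasSum_g x α β hx hy).tsum_eq]
  have hbnn : (0:ℝ → ℝ) ≤ᵐ[volume.restrict (Set.Ioo (0:ℝ) 1)]
      fun y => y ^ (α - 1) * (1-y) ^ (β - 1) := by
    rw [EventuallyLE, ae_restrict_iff' measurableSet_Ioo]
    apply Filter.Eventually.of_forall
    intro y hy
    exact mul_nonneg (Real.rpow_nonneg hy.1.le _) (Real.rpow_nonneg (by linarith [hy.2]) _)
  have hlin : ∫⁻ y in Set.Ioo (0:ℝ) 1, (∑' k : ℕ, G k y)
      = ENNReal.ofReal (betaFn α β) := by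
    rw [setLIntegral_congr_fun measurableSet_Ioo hpt,
      ← ofReal_integral_eq_lintegral_ofReal (integrableOn_beta_Ioo hα hβ) hbnn,
      integral_beta_Ioo hα hβ]
  have hknn : ∀ k : ℕ, (0:ℝ → ℝ) ≤ᵐ[volume.restrict (Set.Ioo (0:ℝ) 1)] g k := by
    intro k
    rw [EventuallyLE, ae_restrict_iff' measurableSet_Ioo]
    exact Filter.Eventually.of_forall fun y hy => g_nonneg x α β hx k hy
  have hterm : ∀ k : ℕ, ∫⁻ y in Set.Ioo (0:ℝ) 1, G k y
      = ENNReal.ofReal (nbCoef x k * betaFn ((k:ℝ) + α) (x + β)) := by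
    intro k
    rw [hG]
    rw [← ofReal_integral_eq_lintegral_ofReal (integrableOn_g x α β hx hα hβ k) (hknn k),
      integral_g x α β hx hα hβ k]
  have key : (∑' k : ℕ, ENNReal.ofReal (nbCoef x k * betaFn ((k:ℝ) + α) (x + β)))
      = ENNReal.ofReal (betaFn α β) := by
    rw [← hlin, lintegral_tsum hmeas]
    exact tsum_congr fun k => (hterm k).symm
  -- convert back to reals
  set b : ℕ → ℝ := fun k => nbCoef x k * betaFn ((k:ℝ) + α) (x + β) with hb
  have hbpos : ∀ k : ℕ, 0 ≤ b k := fun k =>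
    (mul_pos (nbCoef_pos x hx k) (betaFn_pos (by positivity) (by positivity))).le
  have hfin : (∑' k : ℕ, ENNReal.ofReal (b k)) ≠ ⊤ := by
    rw [key]; exact ENNReal.ofReal_ne_top
  have hsummable : Summable b := by
    have := ENNReal.summable_toReal hfin
    refine this.congr fun k => ?_
    rw [ENNReal.toReal_ofReal (hbpos k)]
  have htsum : ∑' k : ℕ, b k = betaFn α β := by
    have h1 : (∑' k : ℕ, ENNReal.ofReal (b k)).toReal = betaFn α β := by
      rw [key, ENNReal.toReal_ofReal (betaFn_pos hα hβ).le]
    rw [← h1, ENNReal.tsum_toReal_eq (fun k => ENNReal.ofReal_ne_top)]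
    exact tsum_congr fun k => (ENNReal.toReal_ofReal (hbpos k)).symm
  have := hsummable.hasSum
  rwa [htsum] at this

lemma hasSum_bnbPmf (x α β : ℝ) (hx : 0 < x) (hα : 0 < α) (hβ : 0 < β) :
    HasSum (fun k : ℕ => bnbPmf x α β k) 1 := by
  have h := (hasSum_coef_beta x α β hx hα hβ).div_const (betaFn α β)
  rw [div_self (betaFn_pos hα hβ).ne'] at h
  exact h.congr_fun fun k => (bnbPmf_eq x α β k)

lemma Gamma_shift (β : ℝ) (hβ : β ≠ 1) : Real.Gamma β = (β - 1) * Real.Gamma (β - 1) := by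
  have := Real.Gamma_add_one (show β - 1 ≠ 0 by intro h; apply hβ; linarith)
  rwa [sub_add_cancel] at this

lemma betaFn_shift (α β : ℝ) (hα : 0 < α) (hβ1 : 1 < β) :
    betaFn (α + 1) (β - 1) = betaFn α β * (α / (β - 1)) := by
  have hΓβ := Gamma_shift β (by linarith)
  have hΓα : Real.Gamma (α + 1) = α * Real.Gamma α := Real.Gamma_add_one hα.ne'
  rw [betaFn, betaFn, show α + 1 + (β - 1) = α + β by ring, hΓα, hΓβ]
  have h1 : Real.Gamma (α + β) ≠ 0 := (Real.Gamma_pos_of_pos (by linarith)).ne'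
  have h2 : β - 1 ≠ 0 := by linarith
  field_simp

lemma nbCoef_shift1 (x : ℝ) (hx : 0 < x) (k : ℕ) :
    ((k:ℝ) + 1) * nbCoef x (k + 1) = x * nbCoef (x + 1) k := by
  rw [nbCoef, nbCoef]
  have h1 : Real.Gamma (x + ((k:ℕ)+1:ℕ)) = Real.Gamma ((x+1) + k) := by
    congr 1; push_cast; ring
  have h2 : Real.Gamma (x + 1) = x * Real.Gamma x := Real.Gamma_add_one hx.ne'
  rw [h1, h2, Nat.factorial_succ]
  have h3 : Real.Gamma x ≠ 0 := (Real.Gamma_pos_of_pos hx).ne'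
  have h4 : ((k:ℕ).factorial : ℝ) ≠ 0 := by positivity
  have h5 : ((k:ℝ) + 1) ≠ 0 := by positivity
  push_cast
  field_simp

lemma bnb_shift1 (x α β : ℝ) (hx : 0 < x) (hα : 0 < α) (hβ1 : 1 < β) (k : ℕ) :
    ((k:ℕ)+1:ℕ) * bnbPmf x α β (k+1) = (x * α / (β - 1)) * bnbPmf (x+1) (α+1) (β-1) k := by
  rw [bnbPmf_eq, bnbPmf_eq]
  push_cast
  have h2 : betaFn ((k:ℝ) + 1 + α) (x + β) = betaFn ((k:ℝ) + (α+1)) (x + 1 + (β-1)) := by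
    congr 1 <;> ring
  have h3 := betaFn_shift α β hα hβ1
  have h4 : ((k:ℝ) + 1) * nbCoef x (k + 1) = x * nbCoef (x + 1) k := by
    have := nbCoef_shift1 x hx k
    push_cast at this
    exact this
  have h5 : betaFn α β ≠ 0 := (betaFn_pos hα (by linarith)).ne'
  have h7 : (β:ℝ) - 1 ≠ 0 := by linarith
  have h8 : α ≠ 0 := hα.ne'
  rw [h2, h3]
  set B := betaFn ((k:ℝ) + (α+1)) (x + 1 + (β-1)) with hB
  have e1 : ((k:ℝ) + 1) * (nbCoef x (k+1) * B / betaFn α β)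
      = (((k:ℝ)+1) * nbCoef x (k+1)) * (B / betaFn α β) := by ring
  rw [e1, h4]
  field_simp

lemma hasSum_bnb_mean (x α β : ℝ) (hx : 0 < x) (hα : 0 < α) (hβ1 : 1 < β) :
    HasSum (fun k : ℕ => (k:ℝ) * bnbPmf x α β k) (x * α / (β - 1)) := by
  have h0 := (hasSum_bnbPmf (x+1) (α+1) (β-1) (by linarith) (by linarith) (by linarith)).mul_left
    (x * α / (β - 1))
  rw [mul_one] at h0
  rw [← hasSum_nat_add_iff' 1]
  simp only [Finset.range_one, Finset.sum_singleton, Nat.cast_zero, zero_mul, sub_zero]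
  refine h0.congr_fun fun k => ?_
  have := bnb_shift1 x α β hx hα hβ1 k
  push_cast at this ⊢
  linarith [this]

lemma betaFn_shift2 (α β : ℝ) (hα : 0 < α) (hβ2 : 2 < β) :
    betaFn (α + 2) (β - 2) = betaFn α β * (α * (α+1) / ((β - 1) * (β - 2))) := by
  have h1 := betaFn_shift (α+1) (β-1) (by linarith) (by linarith)
  rw [show α+1+1 = α+2 by ring, show β-1-1 = β-2 by ring] at h1
  rw [h1, betaFn_shift α β hα (by linarith)]
  have : β - 1 ≠ 0 := by intro h; linarith
  have : β - 2 ≠ 0 := by intro h; linarith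
  field_simp

lemma nbCoef_shift2 (x : ℝ) (hx : 0 < x) (k : ℕ) :
    ((k:ℝ) + 2) * (((k:ℝ) + 1) * nbCoef x (k + 2)) = x * ((x+1) * nbCoef (x + 2) k) := by
  have h1 : (((k+1:ℕ):ℝ) + 1) * nbCoef x ((k+1) + 1) = x * nbCoef (x + 1) (k+1) :=
    nbCoef_shift1 x hx (k+1)
  have h2 : ((k:ℝ) + 1) * nbCoef (x+1) (k + 1) = (x+1) * nbCoef ((x+1) + 1) k :=
    nbCoef_shift1 (x+1) (by linarith) k
  rw [show (x+1)+1 = x+2 by ring] at h2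
  push_cast at h1
  have : ((k:ℝ)+2) * (((k:ℝ)+1) * nbCoef x (k+2)) = ((k:ℝ)+1) * (((k:ℝ)+1+1) * nbCoef x (k+1+1)) := by
    ring_nf
  rw [this, h1]
  rw [show (k:ℝ)+1 = (((k:ℕ):ℝ)+1) by push_cast; ring] at h2
  nlinarith [h2]

lemma bnb_shift2 (x α β : ℝ) (hx : 0 < x) (hα : 0 < α) (hβ2 : 2 < β) (k : ℕ) :
    ((k:ℕ)+2:ℕ) * (((k:ℕ)+1:ℕ) * bnbPmf x α β (k+2))
      = (x * (x+1) * α * (α+1) / ((β - 1) * (β - 2))) * bnbPmf (x+2) (α+2) (β-2) k := by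
  rw [bnbPmf_eq, bnbPmf_eq]
  push_cast
  have h2 : betaFn ((k:ℝ) + 2 + α) (x + β) = betaFn ((k:ℝ) + (α+2)) (x + 2 + (β-2)) := by
    congr 1 <;> ring
  have h3 := betaFn_shift2 α β hα hβ2
  have h4 := nbCoef_shift2 x hx k
  have h5 : betaFn α β ≠ 0 := (betaFn_pos hα (by linarith)).ne'
  have h61 : (β:ℝ) - 1 ≠ 0 := by intro h; linarith
  have h62 : (β:ℝ) - 2 ≠ 0 := by intro h; linarith
  have h8 : α ≠ 0 := hα.ne'
  have h9 : α + 1 ≠ 0 := by positivity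
  rw [h2, h3]
  set B := betaFn ((k:ℝ) + (α+2)) (x + 2 + (β-2)) with hB
  have e1 : ((k:ℝ) + 2) * (((k:ℝ)+1) * (nbCoef x (k+2) * B / betaFn α β))
      = (((k:ℝ)+2) * (((k:ℝ)+1) * nbCoef x (k+2))) * (B / betaFn α β) := by ring
  rw [e1, h4]
  field_simp

lemma hasSum_bnb_fac2 (x α β : ℝ) (hx : 0 < x) (hα : 0 < α) (hβ2 : 2 < β) :
    HasSum (fun k : ℕ => (k:ℝ) * ((k:ℝ) - 1) * bnbPmf x α β k)
      (x * (x+1) * α * (α+1) / ((β - 1) * (β - 2))) := by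
  have h0 := (hasSum_bnbPmf (x+2) (α+2) (β-2) (by linarith) (by linarith) (by linarith)).mul_left
    (x * (x+1) * α * (α+1) / ((β - 1) * (β - 2)))
  rw [mul_one] at h0
  rw [← hasSum_nat_add_iff' 2]
  have hz : ∑ i ∈ Finset.range 2, (i:ℝ) * ((i:ℝ) - 1) * bnbPmf x α β i = 0 := by
    simp [Finset.sum_range_succ]
  rw [hz, sub_zero]
  refine h0.congr_fun fun k => ?_
  have := bnb_shift2 x α β hx hα hβ2 k
  push_cast at this ⊢
  nlinarith [this]

lemma hasSum_bnb_sq (x α β : ℝ) (hx : 0 < x) (hα : 0 < α) (hβ2 : 2 < β) :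
    HasSum (fun k : ℕ => (k:ℝ)^2 * bnbPmf x α β k)
      (x * (x+1) * α * (α+1) / ((β - 1) * (β - 2)) + x * α / (β - 1)) := by
  have h1 := (hasSum_bnb_fac2 x α β hx hα hβ2).add (hasSum_bnb_mean x α β hx hα (by linarith))
  refine h1.congr_fun fun k => ?_
  ring

lemma pih_zero (r : ℝ → ℝ) (t : ℝ) : pih r t 0 = 0 := by
  simp [pih]

lemma pih_hasDerivAt (r : ℝ → ℝ) (hr_cont : Continuous r) (t : ℝ) :
    HasDerivAt (fun h => pih r t h) (r t) 0 := by
  have h1 : HasDerivAt (fun u => ∫ s in t..u, r s) (r t) t :=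
    (hr_cont.integral_hasStrictDerivAt t t).hasDerivAt
  have h2 : HasDerivAt (fun h : ℝ => t + h) 1 0 := by
    simpa using (hasDerivAt_id (0:ℝ)).const_add t
  have h3 : HasDerivAt (fun h : ℝ => ∫ s in t..(t + h), r s) (r t * 1) 0 := by
    have h1' : HasDerivAt (fun u => ∫ s in t..u, r s) (r t) ((fun h : ℝ => t + h) 0) := by
      simpa using h1
    exact h1'.comp 0 h2
  have h4 : HasDerivAt (fun h : ℝ => -(∫ s in t..(t + h), r s)) (-(r t)) 0 := by
    exact h3.neg.congr_deriv (by ring)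
  have h5 := (Real.hasDerivAt_exp (-(∫ s in t..(t + (0:ℝ)), r s))).comp 0 h4
  have h6 : HasDerivAt (fun h : ℝ => Real.exp (-(∫ s in t..(t + h), r s))) (-(r t)) 0 := by
    exact h5.congr_deriv (by simp)
  have := h6.const_sub 1
  simpa [pih] using this

lemma pih_slope_tendsto (r : ℝ → ℝ) (hr_cont : Continuous r) (t : ℝ) :
    Filter.Tendsto (fun h : ℝ => pih r t h / h) (nhdsWithin 0 (Set.Ioi 0)) (nhds (r t)) := by
  have h1 := (hasDerivAt_iff_tendsto_slope).mp (pih_hasDerivAt r hr_cont t)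
  have h2 : Filter.Tendsto (fun h : ℝ => pih r t h / h)
      (nhdsWithin 0 {(0:ℝ)}ᶜ) (nhds (r t)) := by
    refine h1.congr' ?_
    filter_upwards [self_mem_nhdsWithin] with h hh
    rw [slope_def_field, pih_zero]
    simp only [sub_zero]
  exact h2.mono_left (nhdsWithin_mono 0 (fun y hy => ne_of_gt hy))

lemma pih_tendsto_zero (r : ℝ → ℝ) (hr_cont : Continuous r) (t : ℝ) :
    Filter.Tendsto (fun h : ℝ => pih r t h) (nhdsWithin 0 (Set.Ioi 0)) (nhds 0) := by
  have := (pih_hasDerivAt r hr_cont t).continuousAt.continuousWithinAt (s := Set.Ioi 0)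
  rw [ContinuousWithinAt, pih_zero] at this
  exact this

lemma pih_pos (r : ℝ → ℝ) (hr_cont : Continuous r) (hr_pos : ∀ s, 0 < r s)
    (t : ℝ) {h : ℝ} (hh : 0 < h) : 0 < pih r t h := by
  have hint : 0 < ∫ s in t..(t + h), r s := by
    apply intervalIntegral.intervalIntegral_pos_of_pos
      (hr_cont.intervalIntegrable t (t + h)) hr_pos (by linarith)
  have : Real.exp (-(∫ s in t..(t + h), r s)) < 1 := by
    rw [Real.exp_lt_one_iff]
    linarith
  simp only [pih]
  linarith

lemma pih_lt_one (r : ℝ → ℝ) (t h : ℝ) : pih r t h < 1 := by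
  have := Real.exp_pos (-(∫ s in t..(t + h), r s))
  simp only [pih]
  linarith


/-- for `x > 0`, `c > 2`, and `K_h ~ BNB(x, cπ(h), c(1−π(h)))`,
`lim_{h→0+} h⁻¹ E[K_h] = x r(t) c/(c−1)`,
`lim_{h→0+} h⁻¹ Var[K_h] = x² r(t) c/((c−1)(c−2)) + x r(t) c/(c−2)`, and the ratio of
these two limits is strictly greater than `1` (infinitesimal over-dispersion). -/
theorem bnb_infinitesimal_dispersion
    (r : ℝ → ℝ) (hr_cont : Continuous r) (hr_pos : ∀ s, 0 < r s)
    (t c : ℝ) (hc : 2 < c) (x : ℝ) (hx : 0 < x) :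
    Tendsto (fun h : ℝ => h⁻¹ *
        ∑' k : ℕ, (k : ℝ) * bnbPmf x (c * pih r t h) (c * (1 - pih r t h)) k)
      (𝓝[>] (0 : ℝ)) (𝓝 (x * r t * (c / (c - 1)))) ∧
    Tendsto (fun h : ℝ => h⁻¹ *
        ((∑' k : ℕ, (k : ℝ) ^ 2 * bnbPmf x (c * pih r t h) (c * (1 - pih r t h)) k)
          - (∑' k : ℕ, (k : ℝ) * bnbPmf x (c * pih r t h) (c * (1 - pih r t h)) k) ^ 2))
      (𝓝[>] (0 : ℝ))
      (𝓝 (x ^ 2 * r t * (c / ((c - 1) * (c - 2))) + x * r t * (c / (c - 2)))) ∧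
    1 < (x ^ 2 * r t * (c / ((c - 1) * (c - 2))) + x * r t * (c / (c - 2)))
          / (x * r t * (c / (c - 1))) := by
  have hrt := hr_pos t
  have hc1 : (0:ℝ) < c - 1 := by linarith
  have hc2 : (0:ℝ) < c - 2 := by linarith
  have hc0 : (0:ℝ) < c := by linarith
  -- eventual facts
  have hev : ∀ᶠ h in 𝓝[>] (0:ℝ),
      0 < h ∧ 0 < pih r t h ∧ pih r t h < (c-2)/c := by
    have h2 := (pih_tendsto_zero r hr_cont t).eventually_lt_const
      (show (0:ℝ) < (c-2)/c by positivity)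
    filter_upwards [self_mem_nhdsWithin, h2] with h hh h2'
    exact ⟨hh, pih_pos r hr_cont hr_pos t hh, h2'⟩
  have hβfacts : ∀ p : ℝ, 0 < p → p < (c-2)/c →
      0 < c * p ∧ 2 < c * (1 - p) ∧ 1 < c * (1 - p) := by
    intro p hp hp2
    have : c * p < c - 2 := by
      have := (lt_div_iff₀ hc0).mp hp2
      nlinarith [this]
    constructor
    · positivity
    · constructor <;> nlinarith [this]
  -- the slope limit
  have hslope := pih_slope_tendsto r hr_cont t
  have hpize := pih_tendsto_zero r hr_cont t
  -- part 1
  have g1cont : ContinuousAt (fun p : ℝ => x * c / (c * (1 - p) - 1)) 0 := by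
    apply ContinuousAt.div continuousAt_const
    · exact ((continuous_const.mul (continuous_const.sub continuous_id)).sub
        continuous_const).continuousAt
    · norm_num; linarith
  have g1lim : Tendsto (fun h : ℝ => x * c / (c * (1 - pih r t h) - 1))
      (𝓝[>] (0:ℝ)) (𝓝 (x * c / (c - 1))) := by
    have := g1cont.tendsto.comp hpize
    have e : x * c / (c * (1 - (0:ℝ)) - 1) = x * c / (c - 1) := by norm_num
    rw [Function.comp_def] at this
    rwa [e] at this
  have part1 : Tendsto (fun h : ℝ => h⁻¹ *
      ∑' k : ℕ, (k : ℝ) * bnbPmf x (c * pih r t h) (c * (1 - pih r t h)) k)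
      (𝓝[>] (0 : ℝ)) (𝓝 (x * r t * (c / (c - 1)))) := by
    have hmul := hslope.mul g1lim
    have hval : r t * (x * c / (c - 1)) = x * r t * (c / (c - 1)) := by
      field_simp
    rw [hval] at hmul
    refine Tendsto.congr' ?_ hmul
    filter_upwards [hev] with h ⟨hh, hp, hp2⟩
    obtain ⟨hα, hβ2, hβ1⟩ := hβfacts _ hp hp2
    set p := pih r t h with hpdef
    have htsum := (hasSum_bnb_mean x (c*p) (c*(1-p)) hx hα hβ1).tsum_eq
    rw [htsum]
    have hden : c * (1 - p) - 1 ≠ 0 := by linarith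
    have hh' : h ≠ 0 := hh.ne'
    field_simp
  refine ⟨part1, ?_, ?_⟩
  -- part 2
  · set g2 : ℝ → ℝ := fun p => x*(x+1)*c*(c*p+1)/((c*(1-p)-1)*(c*(1-p)-2))
      + x*c/(c*(1-p)-1) - p*(x*c/(c*(1-p)-1))^2 with hg2
    have g2cont : ContinuousAt g2 0 := by
      have hden1 : ContinuousAt (fun p : ℝ => c * (1 - p) - 1) 0 :=
        ((continuous_const.mul (continuous_const.sub continuous_id)).sub
          continuous_const).continuousAt
      have hden2 : ContinuousAt (fun p : ℝ => c * (1 - p) - 2) 0 :=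
        ((continuous_const.mul (continuous_const.sub continuous_id)).sub
          continuous_const).continuousAt
      have hne1 : c * (1 - (0:ℝ)) - 1 ≠ 0 := by norm_num; linarith
      have hne2 : c * (1 - (0:ℝ)) - 2 ≠ 0 := by norm_num; linarith
      have hnum : ContinuousAt (fun p : ℝ => x*(x+1)*c*(c*p+1)) 0 :=
        (continuous_const.mul ((continuous_const.mul continuous_id).add
          continuous_const)).continuousAt
      have t1 : ContinuousAt (fun p : ℝ => x*(x+1)*c*(c*p+1)/((c*(1-p)-1)*(c*(1-p)-2))) 0 := by
        exact ContinuousAt.div hnum (hden1.mul hden2) (mul_ne_zero hne1 hne2)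
      have t2 : ContinuousAt (fun p : ℝ => x*c/(c*(1-p)-1)) 0 :=
        ContinuousAt.div continuousAt_const hden1 hne1
      have t3 : ContinuousAt (fun p : ℝ => p*(x*c/(c*(1-p)-1))^2) 0 :=
        continuousAt_id.mul (t2.pow 2)
      exact (t1.add t2).sub t3
    have g2zero : g2 0 = x*(x+1)*c/((c-1)*(c-2)) + x*c/(c-1) := by
      rw [hg2]
      norm_num
    have g2lim : Tendsto (fun h : ℝ => g2 (pih r t h)) (𝓝[>] (0:ℝ))
        (𝓝 (x*(x+1)*c/((c-1)*(c-2)) + x*c/(c-1))) := by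
      have := g2cont.tendsto.comp hpize
      rw [Function.comp_def, g2zero] at this
      exact this
    have hmul := hslope.mul g2lim
    have hval : r t * (x*(x+1)*c/((c-1)*(c-2)) + x*c/(c-1))
        = x ^ 2 * r t * (c / ((c - 1) * (c - 2))) + x * r t * (c / (c - 2)) := by
      field_simp
      ring
    rw [hval] at hmul
    refine Tendsto.congr' ?_ hmul
    filter_upwards [hev] with h ⟨hh, hp, hp2⟩
    obtain ⟨hα, hβ2, hβ1⟩ := hβfacts _ hp hp2
    set p := pih r t h with hpdef
    have htsum1 := (hasSum_bnb_mean x (c*p) (c*(1-p)) hx hα hβ1).tsum_eq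
    have htsum2 := (hasSum_bnb_sq x (c*p) (c*(1-p)) hx hα hβ2).tsum_eq
    rw [htsum1, htsum2, hg2]
    have hden1 : c * (1 - p) - 1 ≠ 0 := by linarith
    have hden2 : c * (1 - p) - 2 ≠ 0 := by linarith
    have hh' : h ≠ 0 := hh.ne'
    field_simp
  -- part 3
  · have hd : 0 < x * r t * (c / (c - 1)) := by positivity
    rw [lt_div_iff₀ hd]
    have key : x ^ 2 * r t * (c / ((c - 1) * (c - 2))) + x * r t * (c / (c - 2))
        - x * r t * (c / (c - 1)) = x * r t * c * (x + 1) / ((c - 1) * (c - 2)) := by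
      field_simp
      ring
    nlinarith [key, mul_pos (mul_pos (mul_pos hx hrt) hc0)
      (show (0:ℝ) < x + 1 by linarith),
      mul_pos hc1 hc2,
      div_pos (mul_pos (mul_pos (mul_pos hx hrt) hc0) (show (0:ℝ) < x + 1 by linarith))
        (mul_pos hc1 hc2)]
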